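/- arXiv:1711.00765 — 3 statements merged into one kernel-verified Lean document; each statement's English description precedes it below -/
import Mathlib

section
/- Let p* be the minimizer over polynomials p of total degree ≤ m in d variables of the weighted least-squares cost Σᵢ (p(xᵢ) - fᵢ)² wᵢ with positive weights wᵢ, assuming the associated least-squares matrix is invertible. Then the evaluation p*(0) equals Σᵢ aᵢ fᵢ, where the coefficients aᵢ minimize Σᵢ aᵢ²/wᵢ subject to the constraints Σᵢ aᵢ b(xᵢ) = b(0) for every polynomial b of total degree ≤ m. -/
open MvPolynomial Matrix Finset

private lemma quad_aux (B C : ℝ) (hC : 0 ≤ C)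
    (H : ∀ t : ℝ, 0 ≤ 2 * t * B + t ^ 2 * C) : B = 0 := by
  have h := H (-B / (C + 1))
  have hC1 : 0 < C + 1 := by linarith
  have key : 0 ≤ (2 * (-B / (C + 1)) * B + (-B / (C + 1)) ^ 2 * C) * (C + 1) ^ 2 := by
    positivity
  have expand : (2 * (-B / (C + 1)) * B + (-B / (C + 1)) ^ 2 * C) * (C + 1) ^ 2
      = B ^ 2 * (-(C + 2)) := by
    field_simp
    ring
  rw [expand] at key
  nlinarith [sq_nonneg B]

/-- Backus–Gilbert duality for moving least-squares: the value at 0 of the weighted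
least-squares polynomial equals `∑ aᵢ fᵢ` where the `aᵢ` solve the dual problem. -/
theorem stmt_2 {d m N J : ℕ}
    (x : Fin N → Fin d → ℝ) (f w : Fin N → ℝ) (hw : ∀ i, 0 < w i)
    (bb : Module.Basis (Fin J) ℝ (MvPolynomial.restrictTotalDegree (Fin d) ℝ m))
    (hcond : IsUnit
      ((Matrix.of fun i j => eval (x i) ((bb j : MvPolynomial (Fin d) ℝ)))ᵀ *
        Matrix.diagonal w *
        Matrix.of fun i j => eval (x i) ((bb j : MvPolynomial (Fin d) ℝ))))
    (p : MvPolynomial (Fin d) ℝ) (hpm : p.totalDegree ≤ m)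
    (hpmin : ∀ q : MvPolynomial (Fin d) ℝ, q.totalDegree ≤ m →
      ∑ i, (eval (x i) p - f i) ^ 2 * w i ≤ ∑ i, (eval (x i) q - f i) ^ 2 * w i)
    (a : Fin N → ℝ)
    (ha : ∀ b : MvPolynomial (Fin d) ℝ, b.totalDegree ≤ m →
      ∑ i, a i * eval (x i) b = eval 0 b)
    (hamin : ∀ a' : Fin N → ℝ,
      (∀ b : MvPolynomial (Fin d) ℝ, b.totalDegree ≤ m →
        ∑ i, a' i * eval (x i) b = eval 0 b) →
      ∑ i, (a i) ^ 2 / w i ≤ ∑ i, (a' i) ^ 2 / w i) :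
    eval 0 p = ∑ i, a i * f i := by
  set r : Fin N → ℝ := fun i => eval (x i) p - f i with hr
  -- Step 1: residual orthogonality
  have step1 : ∀ q : MvPolynomial (Fin d) ℝ, q.totalDegree ≤ m →
      ∑ i, r i * eval (x i) q * w i = 0 := by
    intro q hq
    apply quad_aux _ (∑ i, eval (x i) q ^ 2 * w i)
    · exact Finset.sum_nonneg fun i _ => mul_nonneg (sq_nonneg _) (hw i).le
    · intro t
      have hdeg : (p + t • q).totalDegree ≤ m := by
        refine le_trans (totalDegree_add _ _) (max_le hpm ?_)
        exact le_trans (totalDegree_smul_le _ _) hq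
      have h := hpmin (p + t • q) hdeg
      have heval : ∀ i, eval (x i) (p + t • q) = eval (x i) p + t * eval (x i) q := by
        intro i
        simp [smul_eval]
      have hexp : ∑ i, (eval (x i) (p + t • q) - f i) ^ 2 * w i
          = ∑ i, (r i) ^ 2 * w i + (2 * t * ∑ i, r i * eval (x i) q * w i
            + t ^ 2 * ∑ i, eval (x i) q ^ 2 * w i) := by
        rw [Finset.mul_sum, Finset.mul_sum, ← Finset.sum_add_distrib, ← Finset.sum_add_distrib]
        refine Finset.sum_congr rfl fun i _ => ?_
        rw [heval i, hr]
        ring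
      rw [hexp] at h
      linarith
  -- Step 2: ∑ a i * r i = 0
  have step2 : ∑ i, a i * r i = 0 := by
    apply quad_aux _ (∑ i, (w i * r i) ^ 2 / w i)
    · exact Finset.sum_nonneg fun i _ => div_nonneg (sq_nonneg _) (hw i).le
    · intro t
      set a' : Fin N → ℝ := fun i => a i + t * (w i * r i) with ha'
      have hfeas : ∀ b : MvPolynomial (Fin d) ℝ, b.totalDegree ≤ m →
          ∑ i, a' i * eval (x i) b = eval 0 b := by
        intro b hb
        have h1 := ha b hb
        have h2 := step1 b hb
        have : ∑ i, a' i * eval (x i) b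
            = ∑ i, a i * eval (x i) b + t * ∑ i, r i * eval (x i) b * w i := by
          rw [Finset.mul_sum, ← Finset.sum_add_distrib]
          refine Finset.sum_congr rfl fun i _ => ?_
          simp only [ha']
          ring
        rw [this, h1, h2]
        ring
      have h := hamin a' hfeas
      have hexp : ∑ i, (a' i) ^ 2 / w i
          = ∑ i, (a i) ^ 2 / w i + (2 * t * ∑ i, a i * r i
            + t ^ 2 * ∑ i, (w i * r i) ^ 2 / w i) := by
        rw [Finset.mul_sum, Finset.mul_sum, ← Finset.sum_add_distrib, ← Finset.sum_add_distrib]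
        refine Finset.sum_congr rfl fun i _ => ?_
        have hwne : w i ≠ 0 := (hw i).ne'
        field_simp [ha']
        ring
      rw [hexp] at h
      linarith
  -- Conclusion
  have h0 := ha p hpm
  rw [← h0]
  have : ∑ i, a i * eval (x i) p = ∑ i, a i * f i + ∑ i, a i * r i := by
    rw [← Finset.sum_add_distrib]
    refine Finset.sum_congr rfl fun i _ => ?_
    rw [hr]; ring
  rw [this, step2, add_zero]
end

section
/- Let M ⊂ ℝ^n be a compact C² submanifold with reach τ > 0, and let x ∈ M. Then every point p ∈ M with ‖p − x‖ ≤ s satisfies d(p, x + T_x M) ≤ s²/(2τ), i.e., the distance from p to the affine tangent space at x is at most s²/(2τ). -/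
open Metric Filter Set
open scoped RealInnerProductSpace Topology
set_option linter.unusedSectionVars false
set_option linter.deprecated false
set_option maxHeartbeats 1000000

theorem step_arith {dk s D ε h dz : ℝ} (hdk : h ≤ dk) (hh : 0 < h) (hs : 0 < s) (hε : 0 < ε)
    (hDh : D * h = s^2 + 2*s*ε) (hDs : D ≤ s/2)
    (hsq : dk^2 + 2*(s*dk) - 2*ε*s ≤ dz^2) (hdz : 0 ≤ dz) : dk + s - D ≤ dz := by
  have hD0 : 0 < D := by nlinarith
  have P1 : s^2 + 2*s*ε ≤ D * dk := by
    calc s^2 + 2*s*ε = D * h := hDh.symm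
      _ ≤ D * dk := by nlinarith
  have P2 : D * D ≤ (s/2) * D := by nlinarith
  have P3 : 0 ≤ s * D := by positivity
  have hA0 : 0 ≤ dk + s - D := by nlinarith
  have hA2 : (dk + s - D)^2 ≤ dz^2 := by nlinarith
  exact le_of_pow_le_pow_left₀ two_ne_zero hdz hA2

section Aux
variable {E : Type*} [NormedAddCommGroup E] [InnerProductSpace ℝ E]

/-- Hypothesis bundle: `M` is compact, and every point of the open `τ`-tube around `M`
has `ξ y` as its unique nearest point in `M`. -/
structure NearData (M : Set E) (τ : ℝ) (ξ : E → E) : Prop where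
  compact : IsCompact M
  pos : 0 < τ
  mem : ∀ y, ξ y ∈ M
  dist_eq : ∀ y, dist y (ξ y) = Metric.infDist y M
  uniq : ∀ y p, Metric.infDist y M < τ → p ∈ M → dist y p = Metric.infDist y M → p = ξ y

/-- Discrete outward "gradient flow" polygon for the distance function. -/
noncomputable def polySeq (M : Set E) (ξ : E → E) (s : ℝ) (y₀ : E) : ℕ → E
  | 0 => y₀
  | k+1 => polySeq M ξ s y₀ k
      + (s / Metric.infDist (polySeq M ξ s y₀ k) M) • (polySeq M ξ s y₀ k - ξ (polySeq M ξ s y₀ k))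

namespace NearData
variable {M : Set E} {τ : ℝ} {ξ : E → E}

theorem norm_sub_xi (hD : NearData M τ ξ) (y : E) :
    ‖y - ξ y‖ = Metric.infDist y M := by
  rw [← dist_eq_norm]; exact hD.dist_eq y

theorem sq_lower (hD : NearData M τ ξ) (y z : E) :
    Metric.infDist y M ^ 2 + 2 * ⟪y - ξ y, z - y⟫
      - 2 * dist (ξ z) (ξ y) * dist z y ≤ Metric.infDist z M ^ 2 := by
  have h1 : Metric.infDist z M = ‖z - ξ z‖ := (hD.norm_sub_xi z).symm
  have h2 : Metric.infDist y M ≤ ‖y - ξ z‖ := by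
    rw [← dist_eq_norm]
    exact Metric.infDist_le_dist_of_mem (hD.mem z)
  have h3 : ‖z - ξ z‖ ^ 2 = ‖y - ξ z‖ ^ 2 + 2 * ⟪y - ξ z, z - y⟫ + ‖z - y‖ ^ 2 := by
    have : z - ξ z = (y - ξ z) + (z - y) := by abel
    rw [this, norm_add_sq_real]
  have h4 : ⟪y - ξ z, z - y⟫ = ⟪y - ξ y, z - y⟫ + ⟪ξ y - ξ z, z - y⟫ := by
    rw [← inner_add_left]; congr 1; abel
  have h5 : -(‖ξ y - ξ z‖ * ‖z - y‖) ≤ ⟪ξ y - ξ z, z - y⟫ :=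
    (abs_le.mp (abs_real_inner_le_norm (ξ y - ξ z) (z - y))).1
  have h6 : ‖ξ y - ξ z‖ = dist (ξ z) (ξ y) := by rw [dist_comm, dist_eq_norm]
  have h7 : ‖z - y‖ = dist z y := (dist_eq_norm z y).symm
  have hy0 : 0 ≤ Metric.infDist y M := Metric.infDist_nonneg
  have h8 : Metric.infDist y M ^ 2 ≤ ‖y - ξ z‖ ^ 2 := by
    have := mul_self_le_mul_self hy0 h2
    nlinarith
  rw [h6, h7] at h5
  have h1sq : Metric.infDist z M ^ 2 = ‖z - ξ z‖ ^ 2 := by rw [h1]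
  nlinarith [sq_nonneg (‖z - y‖)]

theorem polygon_run (hD : NearData M τ ξ) {y₀ : E} {σ ε η : ℝ}
    (h0 : 0 < Metric.infDist y₀ M) (hσ : Metric.infDist y₀ M < σ) (hστ : σ < τ)
    (hε : 0 < ε) (hεh : ε ≤ Metric.infDist y₀ M / 8)
    (hη : 0 < η)
    (hUC : ∀ y z, Metric.infDist y M ≤ σ → Metric.infDist z M ≤ σ →
      dist y z ≤ η → dist (ξ y) (ξ z) ≤ ε) :
    ∃ e : E, ‖e‖ = 1 ∧
      σ - 6 * (σ - Metric.infDist y₀ M) * ε / Metric.infDist y₀ M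
        ≤ Metric.infDist (y₀ + (σ - Metric.infDist y₀ M) • e) M := by
  set h : ℝ := Metric.infDist y₀ M with hh
  set L : ℝ := σ - h with hLdef
  have hL : 0 < L := by rw [hLdef]; linarith
  have hδmin : 0 < min η (min ε (h/8)) := lt_min hη (lt_min hε (by linarith))
  obtain ⟨m₀, hm₀⟩ := exists_nat_gt (L / min η (min ε (h/8)))
  set m : ℕ := m₀ + 1 with hmdef
  have hmpos : (0:ℝ) < (m:ℝ) := by positivity
  have hmgt : L / min η (min ε (h/8)) < (m:ℝ) := by
    have h1 : (m₀:ℝ) ≤ (m:ℝ) := by exact_mod_cast Nat.le_succ m₀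
    linarith
  set s : ℝ := L / m with hsdef
  have hs : 0 < s := div_pos hL hmpos
  have hsmin : s ≤ min η (min ε (h/8)) := by
    rw [hsdef, div_le_iff₀ hmpos]
    rw [div_lt_iff₀ hδmin] at hmgt
    nlinarith
  have hsη : s ≤ η := le_trans hsmin (min_le_left _ _)
  have hsε : s ≤ ε := le_trans hsmin (le_trans (min_le_right _ _) (min_le_left _ _))
  have hsh : s ≤ h/8 := le_trans hsmin (le_trans (min_le_right _ _) (min_le_right _ _))
  have hms : (m:ℝ) * s = L := by
    rw [hsdef]; field_simp
  obtain ⟨D, hDh, hDs, hD0⟩ : ∃ D : ℝ, D * h = s^2 + 2*s*ε ∧ D ≤ s/2 ∧ 0 < D := by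
    refine ⟨(s^2 + 2*s*ε)/h, by field_simp, ?_, by positivity⟩
    rw [div_le_iff₀ h0]
    nlinarith
  set Y : ℕ → E := polySeq M ξ s y₀ with hYdef
  have hYsucc : ∀ k, Y (k+1) = Y k + (s / Metric.infDist (Y k) M) • (Y k - ξ (Y k)) :=
    fun k => rfl
  have hY0 : Y 0 = y₀ := rfl
  clear_value Y
  clear hYdef
  have hmsne : (m:ℝ) ≠ 0 := ne_of_gt hmpos
  clear_value m
  have hsL : s * (m:ℝ) = L := by rw [mul_comm]; exact hms
  clear_value s h L
  clear hsdef hmdef hsmin hmgt hm₀ hδmin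
  have inv : ∀ k, k ≤ m →
      Metric.infDist (Y k) M ≤ h + k*s ∧
      h + k*s - k*D ≤ Metric.infDist (Y k) M ∧
      dist (Y k) y₀ ≤ k*s := by
    intro k
    induction k with
    | zero =>
      intro _
      rw [hY0, ← hh]
      norm_num [dist_self]
    | succ k ih =>
      intro hk1
      have hk : k ≤ m := Nat.le_of_succ_le hk1
      obtain ⟨i1, i2, i3⟩ := ih hk
      have hks : (k:ℝ)*s ≤ L := by
        have hkm : (k:ℝ) ≤ (m:ℝ) := by exact_mod_cast hk
        nlinarith
      have hkD : (k:ℝ)*D ≤ (k:ℝ)*s/2 := by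
        have hk0 : (0:ℝ) ≤ (k:ℝ) := Nat.cast_nonneg k
        nlinarith
      have hδk : h ≤ Metric.infDist (Y k) M := by nlinarith
      have hδkpos : 0 < Metric.infDist (Y k) M := lt_of_lt_of_le h0 hδk
      have hstep : dist (Y (k+1)) (Y k) = s := by
        rw [hYsucc k, dist_eq_norm]
        have heq : Y k + (s / Metric.infDist (Y k) M) • (Y k - ξ (Y k)) - Y k
            = (s / Metric.infDist (Y k) M) • (Y k - ξ (Y k)) := by abel
        rw [heq, norm_smul, hD.norm_sub_xi, Real.norm_eq_abs,
          abs_of_pos (div_pos hs hδkpos)]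
        field_simp
      have hδk1_le : Metric.infDist (Y (k+1)) M ≤ h + ((k:ℝ)+1)*s := by
        have htri := Metric.infDist_le_infDist_add_dist (x := Y (k+1)) (y := Y k) (s := M)
        rw [hstep] at htri
        linarith
      have hin1 : Metric.infDist (Y k) M ≤ σ := by
        have : h + (k:ℝ)*s ≤ σ := by rw [hLdef] at hks; linarith
        linarith
      have hk1m : ((k:ℝ)+1) ≤ (m:ℝ) := by exact_mod_cast hk1
      have hin2 : Metric.infDist (Y (k+1)) M ≤ σ := by
        have h1 : ((k:ℝ)+1)*s ≤ (m:ℝ)*s := by nlinarith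
        rw [hms, hLdef] at h1
        linarith
      have hUCk : dist (ξ (Y (k+1))) (ξ (Y k)) ≤ ε := by
        apply hUC _ _ hin2 hin1
        rw [hstep]; exact hsη
      have hinner : ⟪Y k - ξ (Y k), Y (k+1) - Y k⟫ = s * Metric.infDist (Y k) M := by
        have hdiff : Y (k+1) - Y k = (s / Metric.infDist (Y k) M) • (Y k - ξ (Y k)) := by
          rw [hYsucc k]; abel
        rw [hdiff, real_inner_smul_right, real_inner_self_eq_norm_sq, hD.norm_sub_xi]
        field_simp
      have hsq := hD.sq_lower (Y k) (Y (k+1))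
      rw [hinner, hstep] at hsq
      have hsq' : Metric.infDist (Y k) M ^2 + 2*(s * Metric.infDist (Y k) M) - 2*ε*s
          ≤ Metric.infDist (Y (k+1)) M ^ 2 := by
        have hd0 : 0 ≤ dist (ξ (Y (k+1))) (ξ (Y k)) := dist_nonneg
        nlinarith
      have hgrow : Metric.infDist (Y k) M + s - D ≤ Metric.infDist (Y (k+1)) M :=
        step_arith hδk h0 hs hε hDh hDs hsq' Metric.infDist_nonneg
      refine ⟨by push_cast; push_cast at hδk1_le; linarith, ?_, ?_⟩
      · push_cast
        push_cast at i2
        linarith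
      · have htri2 : dist (Y (k+1)) y₀ ≤ dist (Y (k+1)) (Y k) + dist (Y k) y₀ :=
          dist_triangle _ _ _
        rw [hstep] at htri2
        push_cast
        linarith
  obtain ⟨j1, j2, j3⟩ := inv m le_rfl
  have hBh : ((m:ℝ)*D) * h = L*s + 2*L*ε := by
    have e1 : ((m:ℝ)*D) * h = (m:ℝ) * (D * h) := by ring
    rw [e1, hDh]
    have e2 : (m:ℝ) * (s^2 + 2*s*ε) = ((m:ℝ)*s)*s + 2*((m:ℝ)*s)*ε := by ring
    rw [e2, hms]
  have hBle : (m:ℝ)*D ≤ 3*L*ε/h := by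
    rw [le_div_iff₀ h0]
    nlinarith
  have hB38 : (m:ℝ)*D ≤ 3*L/8 := by
    have h38 : 3*L*ε/h ≤ 3*L/8 := by
      rw [div_le_iff₀ h0]
      nlinarith
    linarith
  rw [hms] at j2 j3
  set cm : ℝ := dist (Y m) y₀ with hcmdef
  clear_value cm
  have hcm_up : cm ≤ L := j3
  have hcm_low : L - (m:ℝ)*D ≤ cm := by
    have htri := Metric.infDist_le_infDist_add_dist (x := Y m) (y := y₀) (s := M)
    rw [← hh, ← hcmdef] at htri
    linarith
  have hcm_pos : 0 < cm := by linarith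
  refine ⟨cm⁻¹ • (Y m - y₀), ?_, ?_⟩
  · rw [norm_smul, Real.norm_eq_abs, abs_of_pos (inv_pos.2 hcm_pos), ← dist_eq_norm, ← hcmdef]
    exact inv_mul_cancel₀ (ne_of_gt hcm_pos)
  · have hYm_eq : Y m - y₀ = cm • cm⁻¹ • (Y m - y₀) := by
      rw [smul_smul, mul_inv_cancel₀ (ne_of_gt hcm_pos), one_smul]
    have hdist2 : dist (Y m) (y₀ + L • cm⁻¹ • (Y m - y₀)) = L - cm := by
      rw [dist_eq_norm]
      have : Y m - (y₀ + L • cm⁻¹ • (Y m - y₀)) = (cm - L) • cm⁻¹ • (Y m - y₀) := by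
        nth_rewrite 1 [show (Y m : E) = y₀ + (Y m - y₀) by abel]
        nth_rewrite 1 [hYm_eq]
        rw [sub_smul]
        abel
      rw [this, norm_smul, norm_smul, Real.norm_eq_abs, Real.norm_eq_abs,
        abs_of_pos (inv_pos.2 hcm_pos), ← dist_eq_norm, ← hcmdef,
        abs_of_nonpos (by linarith : cm - L ≤ 0), inv_mul_cancel₀ (ne_of_gt hcm_pos)]
      ring
    have htri := Metric.infDist_le_infDist_add_dist
      (x := Y m) (y := y₀ + L • cm⁻¹ • (Y m - y₀)) (s := M)
    rw [hdist2] at htri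
    have hfin : h + L - 2*((m:ℝ)*D) ≤ Metric.infDist (y₀ + L • cm⁻¹ • (Y m - y₀)) M := by
      linarith
    have hσhL : σ = h + L := by rw [hLdef]; ring
    have h2B : 2*((m:ℝ)*D) ≤ 6*L*ε/h := by
      have hx := mul_le_mul_of_nonneg_left hBle (by norm_num : (0:ℝ) ≤ 2)
      calc 2*((m:ℝ)*D) ≤ 2 * (3*L*ε/h) := hx
        _ = 6*L*ε/h := by ring
    linarith [hfin, h2B]

theorem unifCont (hD : NearData M τ ξ) [ProperSpace E] {b : ℝ}
    (hb : b < τ) {ε : ℝ} (hε : 0 < ε) :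
    ∃ η > 0, ∀ y z, Metric.infDist y M ≤ b → Metric.infDist z M ≤ b →
      dist y z ≤ η → dist (ξ y) (ξ z) ≤ ε := by
  by_contra hcon
  push_neg at hcon
  have hsel : ∀ n : ℕ, ∃ yz : E × E, Metric.infDist yz.1 M ≤ b ∧ Metric.infDist yz.2 M ≤ b ∧
      dist yz.1 yz.2 ≤ 1/(n+1) ∧ ε < dist (ξ yz.1) (ξ yz.2) := by
    intro n
    obtain ⟨y, z, h1, h2, h3, h4⟩ := hcon (1/(n+1)) (by positivity)
    exact ⟨(y, z), h1, h2, h3, h4⟩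
  choose f hf1 hf2 hf3 hf4 using hsel
  have hm₀ := hD.mem 0
  obtain ⟨r, hr⟩ := hD.compact.isBounded.subset_closedBall (ξ 0)
  set K : Set E := {y | Metric.infDist y M ≤ b} with hK
  have hKc : IsCompact K := by
    have hclosed : IsClosed K := isClosed_le (continuous_infDist_pt M) continuous_const
    have hbd : K ⊆ closedBall (ξ 0) (b + r) := by
      intro y hy
      have h1 : dist y (ξ y) = Metric.infDist y M := hD.dist_eq y
      have h2 : ξ y ∈ closedBall (ξ 0) r := hr (hD.mem y)
      simp only [mem_closedBall] at h2 ⊢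
      calc dist y (ξ 0) ≤ dist y (ξ y) + dist (ξ y) (ξ 0) := dist_triangle _ _ _
        _ ≤ b + r := by rw [h1]; exact add_le_add hy h2
    exact (isCompact_closedBall (ξ 0) (b+r)).of_isClosed_subset hclosed hbd
  have hmemG : ∀ n, ((f n).1, (ξ (f n).1, ξ (f n).2)) ∈ K ×ˢ (M ×ˢ M) := by
    intro n
    exact ⟨hf1 n, hD.mem _, hD.mem _⟩
  obtain ⟨⟨ys, p, q⟩, hmems, φ, hφ, hconv⟩ :=
    (hKc.prod (hD.compact.prod hD.compact)).tendsto_subseq hmemG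
  obtain ⟨hysK, hpM, hqM⟩ : ys ∈ K ∧ p ∈ M ∧ q ∈ M := by
    simpa [Set.mem_prod] using hmems
  have hy : Tendsto (fun k => (f (φ k)).1) atTop (𝓝 ys) :=
    (continuous_fst.tendsto _).comp hconv
  have hp : Tendsto (fun k => ξ (f (φ k)).1) atTop (𝓝 p) :=
    (continuous_fst.tendsto _).comp ((continuous_snd.tendsto _).comp hconv)
  have hq : Tendsto (fun k => ξ (f (φ k)).2) atTop (𝓝 q) :=
    (continuous_snd.tendsto _).comp ((continuous_snd.tendsto _).comp hconv)
  have hone : Tendsto (fun k : ℕ => 1/((φ k : ℝ)+1)) atTop (𝓝 0) :=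
    tendsto_one_div_add_atTop_nhds_zero_nat.comp hφ.tendsto_atTop
  have hz : Tendsto (fun k => (f (φ k)).2) atTop (𝓝 ys) := by
    rw [tendsto_iff_dist_tendsto_zero]
    have hbound : ∀ k, dist ((f (φ k)).2) ys ≤ 1/((φ k:ℝ)+1) + dist ((f (φ k)).1) ys := by
      intro k
      calc dist (f (φ k)).2 ys ≤ dist (f (φ k)).2 (f (φ k)).1 + dist (f (φ k)).1 ys :=
            dist_triangle _ _ _
        _ ≤ _ := by
            rw [dist_comm ((f (φ k)).2)]
            exact add_le_add_left (hf3 (φ k)) _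
    have hlim : Tendsto (fun k => 1/((φ k:ℝ)+1) + dist ((f (φ k)).1) ys) atTop (𝓝 (0+0)) :=
      hone.add (tendsto_iff_dist_tendsto_zero.1 hy)
    rw [add_zero] at hlim
    exact squeeze_zero (fun k => dist_nonneg) hbound hlim
  have hinfy : Tendsto (fun k => Metric.infDist (f (φ k)).1 M) atTop (𝓝 (Metric.infDist ys M)) :=
    ((continuous_infDist_pt M).tendsto ys).comp hy
  have hinfz : Tendsto (fun k => Metric.infDist (f (φ k)).2 M) atTop (𝓝 (Metric.infDist ys M)) :=
    ((continuous_infDist_pt M).tendsto ys).comp hz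
  have hysτ : Metric.infDist ys M < τ := lt_of_le_of_lt hysK hb
  have hpeq : p = ξ ys := by
    apply hD.uniq ys p hysτ hpM
    have h1 : Tendsto (fun k => dist (f (φ k)).1 (ξ (f (φ k)).1)) atTop (𝓝 (dist ys p)) :=
      hy.dist hp
    have h2 : (fun k => dist (f (φ k)).1 (ξ (f (φ k)).1))
        = fun k => Metric.infDist (f (φ k)).1 M := funext fun k => hD.dist_eq _
    rw [h2] at h1
    exact tendsto_nhds_unique h1 hinfy
  have hqeq : q = ξ ys := by
    apply hD.uniq ys q hysτ hqM
    have h1 : Tendsto (fun k => dist (f (φ k)).2 (ξ (f (φ k)).2)) atTop (𝓝 (dist ys q)) :=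
      hz.dist hq
    have h2 : (fun k => dist (f (φ k)).2 (ξ (f (φ k)).2))
        = fun k => Metric.infDist (f (φ k)).2 M := funext fun k => hD.dist_eq _
    rw [h2] at h1
    exact tendsto_nhds_unique h1 hinfz
  have : ε ≤ dist p q := by
    apply ge_of_tendsto (hp.dist hq)
    exact Filter.Eventually.of_forall fun k => le_of_lt (hf4 (φ k))
  rw [hpeq, hqeq, dist_self] at this
  linarith


theorem main_ray (hD : NearData M τ ξ) [ProperSpace E] {y₀ : E} {σ : ℝ}
    (h0 : 0 < Metric.infDist y₀ M) (h1 : Metric.infDist y₀ M ≤ σ) (h2 : σ < τ) :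
    Metric.infDist (ξ y₀ + (σ / Metric.infDist y₀ M) • (y₀ - ξ y₀)) M = σ := by
  rcases eq_or_lt_of_le h1 with heq | hlt
  · rw [← heq, div_self (ne_of_gt h0), one_smul]
    have hpt : ξ y₀ + (y₀ - ξ y₀) = y₀ := by abel
    rw [hpt]
  · set h := Metric.infDist y₀ M with hh
    set L := σ - h with hLdef
    have hL : 0 < L := by rw [hLdef]; linarith
    have hstep : ∀ k : ℕ, ∃ e : E, ‖e‖ = 1 ∧
        σ - 6*L/(h*((k:ℝ)+1)) ≤ Metric.infDist (y₀ + L • e) M := by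
      intro k
      have hε : 0 < min (h/8) (1/((k:ℝ)+1)) := lt_min (by linarith) (by positivity)
      obtain ⟨η, hη, hUC⟩ := hD.unifCont h2 hε
      obtain ⟨e, he, hbound⟩ := hD.polygon_run h0 hlt h2 hε (min_le_left _ _) hη hUC
      rw [← hh, ← hLdef] at hbound
      refine ⟨e, he, le_trans ?_ hbound⟩
      have hε2 : min (h/8) (1/((k:ℝ)+1)) ≤ 1/((k:ℝ)+1) := min_le_right _ _
      have hε0 : 0 < min (h/8) (1/((k:ℝ)+1)) := hε
      have hεk : min (h/8) (1/((k:ℝ)+1)) * ((k:ℝ)+1) ≤ 1 := by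
        rw [← le_div_iff₀ (by positivity : (0:ℝ) < (k:ℝ)+1)]
        exact hε2
      have hdivle : 6*L*(min (h/8) (1/((k:ℝ)+1)))/h ≤ 6*L/(h*((k:ℝ)+1)) := by
        rw [div_le_div_iff₀ h0 (by positivity)]
        have hmul := mul_le_mul_of_nonneg_left hεk
          (by positivity : (0:ℝ) ≤ 6*L*h)
        nlinarith [hmul]
      linarith
    choose e he hbound using hstep
    have hmem : ∀ k, e k ∈ sphere (0:E) 1 := fun k => by
      simpa [mem_sphere_zero_iff_norm] using he k
    obtain ⟨eh, hehmem, φ, hφ, hconv⟩ := (isCompact_sphere (0:E) 1).tendsto_subseq hmem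
    have heh1 : ‖eh‖ = 1 := mem_sphere_zero_iff_norm.mp hehmem
    have htend : Tendsto (fun k => y₀ + L • e (φ k)) atTop (𝓝 (y₀ + L • eh)) :=
      tendsto_const_nhds.add (hconv.const_smul L)
    have hinf : Tendsto (fun k => Metric.infDist (y₀ + L • e (φ k)) M) atTop
        (𝓝 (Metric.infDist (y₀ + L • eh) M)) :=
      ((continuous_infDist_pt M).tendsto _).comp htend
    have hden : Tendsto (fun k : ℕ => h*((φ k : ℝ)+1)) atTop atTop := by
      apply Tendsto.const_mul_atTop h0
      apply tendsto_atTop_add_const_right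
      exact tendsto_natCast_atTop_atTop.comp hφ.tendsto_atTop
    have hzero : Tendsto (fun k : ℕ => 6*L/(h*((φ k : ℝ)+1))) atTop (𝓝 0) :=
      Tendsto.div_atTop tendsto_const_nhds hden
    have hrhs : Tendsto (fun k : ℕ => σ - 6*L/(h*((φ k : ℝ)+1))) atTop (𝓝 σ) := by
      have := tendsto_const_nhds (x := σ) (f := atTop (α := ℕ)) |>.sub hzero
      rwa [sub_zero] at this
    have hlow : σ ≤ Metric.infDist (y₀ + L • eh) M :=
      le_of_tendsto_of_tendsto' hrhs hinf (fun k => hbound (φ k))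
    have hnormy : ‖y₀ - ξ y₀‖ = h := by rw [hD.norm_sub_xi y₀, ← hh]
    have hnormLe : ‖L • eh‖ = L := by
      rw [norm_smul, heh1, Real.norm_eq_abs, abs_of_pos hL, mul_one]
    have hup : Metric.infDist (y₀ + L • eh) M ≤ h + L := by
      have h1' : Metric.infDist (y₀ + L • eh) M ≤ dist (y₀ + L • eh) (ξ y₀) :=
        Metric.infDist_le_dist_of_mem (hD.mem y₀)
      have h2' : dist (y₀ + L • eh) (ξ y₀) = ‖(y₀ - ξ y₀) + L • eh‖ := by
        rw [dist_eq_norm]; congr 1; abel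
      have h3' : ‖(y₀ - ξ y₀) + L • eh‖ ≤ h + L := by
        calc ‖(y₀ - ξ y₀) + L • eh‖ ≤ ‖y₀ - ξ y₀‖ + ‖L • eh‖ := norm_add_le _ _
          _ = h + L := by rw [hnormy, hnormLe]
      linarith
    have hσeq : σ = h + L := by rw [hLdef]; ring
    have heq2 : Metric.infDist (y₀ + L • eh) M = h + L := le_antisymm hup (hσeq ▸ hlow)
    have hnorm_eq : ‖(y₀ - ξ y₀) + L • eh‖ = h + L := by
      have hlow2 : h + L ≤ ‖(y₀ - ξ y₀) + L • eh‖ := by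
        have h1' : Metric.infDist (y₀ + L • eh) M ≤ dist (y₀ + L • eh) (ξ y₀) :=
          Metric.infDist_le_dist_of_mem (hD.mem y₀)
        have h2' : dist (y₀ + L • eh) (ξ y₀) = ‖(y₀ - ξ y₀) + L • eh‖ := by
          rw [dist_eq_norm]; congr 1; abel
        rw [← h2', ← heq2]; exact h1'
      have hup2 : ‖(y₀ - ξ y₀) + L • eh‖ ≤ h + L := by
        calc ‖(y₀ - ξ y₀) + L • eh‖ ≤ ‖y₀ - ξ y₀‖ + ‖L • eh‖ := norm_add_le _ _
          _ = h + L := by rw [hnormy, hnormLe]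
      linarith
    have hsr : SameRay ℝ (y₀ - ξ y₀) (L • eh) := by
      rw [sameRay_iff_norm_add, hnorm_eq, hnormy, hnormLe]
    have hy₀ne : y₀ - ξ y₀ ≠ 0 := by
      rw [← norm_ne_zero_iff, hnormy]; exact ne_of_gt h0
    have hLehne : L • eh ≠ 0 := by
      rw [← norm_ne_zero_iff, hnormLe]; exact ne_of_gt hL
    obtain ⟨r, hr, hre⟩ := hsr.exists_pos_left hy₀ne hLehne
    have hrh : r * h = L := by
      have hcongr := congrArg norm hre
      rw [norm_smul, hnormy, hnormLe, Real.norm_eq_abs, abs_of_pos hr] at hcongr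
      exact hcongr
    have hσh : σ / h = 1 + r := by
      rw [hσeq, ← hrh]
      field_simp
    have hpt : ξ y₀ + (σ/h) • (y₀ - ξ y₀) = y₀ + L • eh := by
      rw [hσh, add_smul, one_smul, ← hre]
      abel
    rw [hpt, heq2, hσeq]


theorem ball_cond (hD : NearData M τ ξ) [ProperSpace E] {x v : E} {sb : ℝ}
    (hx : x ∈ M) (hv : ‖v‖ = 1)
    (hδ : Metric.infDist (x + sb • v) M = sb) (hb0 : 0 < sb) (hbτ : sb < τ) :
    ∀ q ∈ M, ∀ σ : ℝ, sb ≤ σ → σ < τ → 2*σ*⟪v, q - x⟫ ≤ ‖q - x‖^2 := by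
  intro q hq σ hσ1 hσ2
  have hdist : dist (x + sb • v) x = sb := by
    rw [dist_eq_norm]
    have h1 : x + sb • v - x = sb • v := by abel
    rw [h1, norm_smul, hv, Real.norm_eq_abs, abs_of_pos hb0, mul_one]
  have hδ0 : 0 < Metric.infDist (x + sb • v) M := by rw [hδ]; exact hb0
  have hξ : x = ξ (x + sb • v) := by
    apply hD.uniq (x + sb • v) x (by rw [hδ]; exact hbτ) hx
    rw [hδ, hdist]
  have hray := hD.main_ray (y₀ := x + sb • v) hδ0 (by rw [hδ]; exact hσ1) hσ2
  rw [← hξ, hδ] at hray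
  have hpt : x + (σ / sb) • (x + sb • v - x) = x + σ • v := by
    have h1 : x + sb • v - x = sb • v := by abel
    rw [h1, smul_smul, div_mul_cancel₀ _ (ne_of_gt hb0)]
  rw [hpt] at hray
  have hd : σ ≤ dist (x + σ • v) q := by
    calc σ = Metric.infDist (x + σ • v) M := hray.symm
      _ ≤ dist (x + σ • v) q := Metric.infDist_le_dist_of_mem hq
  have hexp : dist (x + σ • v) q ^ 2 = σ^2 - 2*σ*⟪v, q - x⟫ + ‖q - x‖^2 := by
    rw [dist_eq_norm]
    have h1 : x + σ • v - q = σ • v - (q - x) := by abel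
    rw [h1, norm_sub_sq_real, norm_smul, real_inner_smul_left, hv, Real.norm_eq_abs,
      mul_one, sq_abs]
    ring
  have hσ0 : 0 ≤ σ := le_trans (le_of_lt hb0) hσ1
  have hd2 : σ^2 ≤ dist (x + σ • v) q ^ 2 := by
    have := mul_self_le_mul_self hσ0 hd
    nlinarith
  nlinarith [hd2, hexp]

theorem mem_tangentCone_of_seq {x u : E} {q : ℕ → E} (hq : ∀ n, q n ∈ M)
    (hqx : ∀ n, q n ≠ x) (hlim : Tendsto q atTop (𝓝 x))
    (hu : Tendsto (fun n => (‖q n - x‖)⁻¹ • (q n - x)) atTop (𝓝 u)) :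
    u ∈ tangentConeAt ℝ M x := by
  refine mem_tangentConeAt_of_seq atTop (fun n => (‖q n - x‖)⁻¹) (fun n => q n - x) ?_ ?_ hu
  · have h1 : Tendsto (fun n => q n - x) atTop (𝓝 (x - x)) := hlim.sub tendsto_const_nhds
    rwa [sub_self] at h1
  · exact Filter.Eventually.of_forall fun n => by simpa using hq n

theorem normal_ball (hD : NearData M τ ξ) [ProperSpace E] {x v : E} (hx : x ∈ M) (hv : ‖v‖ = 1)
    (hperp : ∀ u, u ∈ tangentConeAt ℝ M x → ⟪v, u⟫ ≤ 0) :
    ∀ q ∈ M, 2*τ*⟪v, q - x⟫ ≤ ‖q - x‖^2 := by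
  have hτ := hD.pos
  obtain ⟨sb, hsbdef⟩ : ∃ sb : ℝ, sb = τ/2 := ⟨_, rfl⟩
  have hsb0 : 0 < sb := by rw [hsbdef]; linarith
  have hsbτ : sb < τ := by rw [hsbdef]; linarith
  -- Step 1: it suffices to prove `infDist (x + sb • v) M = sb`.
  have hCL : Metric.infDist (x + sb • v) M = sb → ∀ q ∈ M, 2*τ*⟪v, q - x⟫ ≤ ‖q - x‖^2 := by
    intro hδ q hq
    have hball := hD.ball_cond hx hv hδ hsb0 hsbτ q hq
    have hseq : Tendsto (fun k : ℕ => τ - sb/((k:ℝ)+1)) atTop (𝓝 τ) := by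
      have h1 : Tendsto (fun k : ℕ => sb/((k:ℝ)+1)) atTop (𝓝 0) := by
        apply Tendsto.div_atTop tendsto_const_nhds
        exact tendsto_atTop_add_const_right _ _ tendsto_natCast_atTop_atTop
      have h2 := (tendsto_const_nhds (x := τ) (f := atTop (α := ℕ))).sub h1
      rwa [sub_zero] at h2
    have hlhs : Tendsto (fun k : ℕ => 2*(τ - sb/((k:ℝ)+1))*⟪v, q - x⟫) atTop
        (𝓝 (2*τ*⟪v, q - x⟫)) := by
      exact (hseq.const_mul 2).mul_const ⟪v, q - x⟫
    apply le_of_tendsto hlhs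
    apply Filter.Eventually.of_forall
    intro k
    apply hball
    · have h1 : sb/((k:ℝ)+1) ≤ sb := by
        rw [div_le_iff₀ (by positivity : (0:ℝ) < (k:ℝ)+1)]
        nlinarith [Nat.cast_nonneg (α := ℝ) k]
      have h2 : τ = 2*sb := by rw [hsbdef]; ring
      linarith
    · have h3 : 0 < sb/((k:ℝ)+1) := by positivity
      linarith
  -- Step 2: prove `infDist (x + sb • v) M = sb`.
  obtain ⟨t, ht_eq⟩ : ∃ t : ℕ → ℝ, ∀ n, t n = sb/((n:ℝ)+1) := ⟨_, fun n => rfl⟩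
  have ht0 : ∀ n, 0 < t n := fun n => by rw [ht_eq n]; positivity
  have htsb : ∀ n, t n ≤ sb := by
    intro n
    rw [ht_eq n, div_le_iff₀ (by positivity : (0:ℝ) < (n:ℝ)+1)]
    nlinarith [Nat.cast_nonneg (α := ℝ) n, hsb0]
  have htτ : ∀ n, t n < τ := fun n => lt_of_le_of_lt (htsb n) hsbτ
  have htlim : Tendsto t atTop (𝓝 0) := by
    have h1 : Tendsto (fun n : ℕ => sb/((n:ℝ)+1)) atTop (𝓝 0) := by
      apply Tendsto.div_atTop tendsto_const_nhds
      exact tendsto_atTop_add_const_right _ _ tendsto_natCast_atTop_atTop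
    exact h1.congr (fun n => (ht_eq n).symm)
  obtain ⟨y, hy_eq⟩ : ∃ y : ℕ → E, ∀ n, y n = x + (t n) • v := ⟨_, fun n => rfl⟩
  have hdyx : ∀ n, dist (y n) x = t n := by
    intro n
    rw [hy_eq n, dist_eq_norm]
    have h1 : x + (t n) • v - x = (t n) • v := by abel
    rw [h1, norm_smul, hv, Real.norm_eq_abs, abs_of_pos (ht0 n), mul_one]
  have hδle : ∀ n, Metric.infDist (y n) M ≤ t n := by
    intro n
    rw [← hdyx n]
    exact Metric.infDist_le_dist_of_mem hx
  by_cases hqx : ∃ n, ξ (y n) = x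
  · obtain ⟨n, hn⟩ := hqx
    have hδeq : Metric.infDist (y n) M = t n := by
      rw [← hD.dist_eq (y n), hn, hdyx n]
    apply hCL
    have hray := hD.main_ray (y₀ := y n) (by rw [hδeq]; exact ht0 n)
      (by rw [hδeq]; exact htsb n) hsbτ
    rw [hδeq, hn] at hray
    have hpt : x + (sb / t n) • (y n - x) = x + sb • v := by
      have h1 : y n - x = (t n) • v := by rw [hy_eq n]; abel
      rw [h1, smul_smul, div_mul_cancel₀ _ (ne_of_gt (ht0 n))]
    rw [hpt] at hray
    exact hray
  · push_neg at hqx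
    obtain ⟨q, hq_eq⟩ : ∃ q : ℕ → E, ∀ n, q n = ξ (y n) := ⟨_, fun n => rfl⟩
    obtain ⟨w, hw_eq⟩ : ∃ w : ℕ → E, ∀ n, w n = q n - x := ⟨_, fun n => rfl⟩
    have hwne : ∀ n, w n ≠ 0 := by
      intro n
      rw [hw_eq n, hq_eq n]
      exact sub_ne_zero.2 (hqx n)
    have hqM : ∀ n, q n ∈ M := fun n => by rw [hq_eq n]; exact hD.mem (y n)
    have hqnex : ∀ n, q n ≠ x := fun n => by rw [hq_eq n]; exact hqx n
    have hdlt : ∀ n, Metric.infDist (y n) M < t n := by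
      intro n
      rcases lt_or_eq_of_le (hδle n) with h | h
      · exact h
      · exfalso
        apply hqx n
        symm
        apply hD.uniq (y n) x (by rw [h]; exact htτ n) hx
        rw [h, hdyx n]
    have hynq : ∀ n, y n - ξ (y n) = (t n) • v - w n := by
      intro n
      rw [hw_eq n, hq_eq n, hy_eq n]
      abel
    have hxiw : ∀ n, ξ (y n) - x = w n := by
      intro n
      rw [hw_eq n, hq_eq n]
    have hdn_eq : ∀ n, Metric.infDist (y n) M = ‖(t n) • v - w n‖ := by
      intro n
      rw [← hD.dist_eq (y n), dist_eq_norm, hynq n]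
    have hwle : ∀ n, ‖w n‖ ≤ 2 * t n := by
      intro n
      have h1 : dist (q n) x ≤ dist (q n) (y n) + dist (y n) x := dist_triangle _ _ _
      have h2 : dist (q n) (y n) = Metric.infDist (y n) M := by
        rw [hq_eq n, dist_comm]; exact hD.dist_eq (y n)
      have h3 : ‖w n‖ = dist (q n) x := by rw [hw_eq n, dist_eq_norm]
      rw [h3]
      rw [h2, hdyx n] at h1
      linarith [hdlt n]
    have hkey : ∀ n, ‖w n‖^2 ≤ 2 * t n * ⟪v, w n⟫ := by
      intro n
      by_cases hd0 : Metric.infDist (y n) M = 0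
      · have h1 : dist (y n) (ξ (y n)) = 0 := by rw [hD.dist_eq (y n), hd0]
        have hyq : y n = ξ (y n) := by rwa [dist_eq_zero] at h1
        have hw : w n = (t n) • v := by
          rw [hw_eq n, hq_eq n, ← hyq, hy_eq n]
          abel
        rw [hw, real_inner_smul_right, real_inner_self_eq_norm_sq, hv, norm_smul, hv,
          Real.norm_eq_abs, abs_of_pos (ht0 n)]
        nlinarith [ht0 n]
      · have hdpos : 0 < Metric.infDist (y n) M :=
          lt_of_le_of_ne Metric.infDist_nonneg (Ne.symm hd0)
        obtain ⟨d, hddef⟩ : ∃ d : ℝ, d = Metric.infDist (y n) M := ⟨_, rfl⟩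
        rw [← hddef] at hdpos
        have hdt : d < t n := by rw [hddef]; exact hdlt n
        have hdsb : d ≤ sb := le_trans (le_of_lt hdt) (htsb n)
        have hray := hD.main_ray (y₀ := y n) (by rw [hddef] at hdpos; exact hdpos)
          (le_trans (le_of_lt (hdlt n)) (htsb n)) hsbτ
        rw [← hddef] at hray
        have hxd : sb ≤ dist (ξ (y n) + (sb / d) • (y n - ξ (y n))) x := by
          calc sb = Metric.infDist (ξ (y n) + (sb / d) • (y n - ξ (y n))) M := hray.symm
            _ ≤ dist (ξ (y n) + (sb / d) • (y n - ξ (y n))) x :=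
                Metric.infDist_le_dist_of_mem hx
        have hzx : ξ (y n) + (sb / d) • (y n - ξ (y n)) - x
            = w n + (sb/d) • ((t n) • v - w n) := by
          rw [hynq n, ← hxiw n]
          abel
        have hnd : ‖(t n) • v - w n‖ = d := by rw [← hdn_eq n, hddef]
        have hdd : sb/d*d = sb := div_mul_cancel₀ _ (ne_of_gt hdpos)
        have hexp : dist (ξ (y n) + (sb / d) • (y n - ξ (y n))) x ^ 2
            = ‖w n‖^2 + 2*((sb/d) * (t n * ⟪w n, v⟫ - ‖w n‖^2)) + sb^2 := by
          rw [dist_eq_norm, hzx, norm_add_sq_real, real_inner_smul_right, inner_sub_right,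
            real_inner_smul_right, real_inner_self_eq_norm_sq, norm_smul, hnd,
            Real.norm_eq_abs, abs_of_pos (div_pos hsb0 hdpos), hdd]
        have hsq : sb^2 ≤ ‖w n‖^2 + 2*((sb/d) * (t n * ⟪w n, v⟫ - ‖w n‖^2)) + sb^2 := by
          rw [← hexp]
          have h4 := mul_self_le_mul_self (le_of_lt hsb0) hxd
          nlinarith
        have hstep : 0 ≤ d * ‖w n‖^2 + 2*sb*(t n * ⟪w n, v⟫ - ‖w n‖^2) := by
          have h1 : 0 ≤ ‖w n‖^2 + 2*((sb/d) * (t n * ⟪w n, v⟫ - ‖w n‖^2)) := by linarith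
          have h2 := mul_le_mul_of_nonneg_left h1 (le_of_lt hdpos)
          have h4 : d * (‖w n‖^2 + 2*((sb/d) * (t n * ⟪w n, v⟫ - ‖w n‖^2)))
              = d * ‖w n‖^2 + 2*sb*(t n * ⟪w n, v⟫ - ‖w n‖^2) := by
            field_simp
          rw [mul_zero] at h2
          linarith [h2, h4.symm.le, h4.le]
        have hI : ⟪w n, v⟫ = ⟪v, w n⟫ := real_inner_comm _ _
        rw [hI] at hstep
        nlinarith [hstep, hsb0, mul_le_mul_of_nonneg_right hdsb (sq_nonneg (‖w n‖))]
    have hqlim : Tendsto q atTop (𝓝 x) := by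
      rw [tendsto_iff_dist_tendsto_zero]
      have hb : ∀ n, dist (q n) x ≤ 2 * t n := by
        intro n
        have h1 : ‖w n‖ = dist (q n) x := by rw [hw_eq n, dist_eq_norm]
        rw [← h1]
        exact hwle n
      apply squeeze_zero (fun n => dist_nonneg) hb
      have h2 := htlim.const_mul 2
      simpa using h2
    have hratio : Tendsto (fun n => ‖w n‖ / t n) atTop (𝓝 0) := by
      by_contra hcon
      have hfreq : ∃ ε > 0, ∀ N : ℕ, ∃ n > N, ε ≤ ‖w n‖ / t n := by
        rw [Metric.tendsto_atTop] at hcon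
        push_neg at hcon
        obtain ⟨ε, hε, hcon⟩ := hcon
        refine ⟨ε, hε, fun N => ?_⟩
        obtain ⟨n, hn1, hn2⟩ := hcon (N+1)
        refine ⟨n, by omega, ?_⟩
        rw [Real.dist_eq, sub_zero,
          abs_of_nonneg (div_nonneg (norm_nonneg _) (le_of_lt (ht0 n)))] at hn2
        exact hn2
      obtain ⟨ε, hε, hfreq⟩ := hfreq
      obtain ⟨φ, hφ, hφP⟩ := Filter.extraction_of_frequently_atTop (Filter.frequently_atTop'.2 hfreq)
      have huh : ∀ k, (‖w (φ k)‖)⁻¹ • w (φ k) ∈ sphere (0:E) 1 := by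
        intro k
        rw [mem_sphere_zero_iff_norm, norm_smul, Real.norm_eq_abs,
          abs_of_pos (inv_pos.2 (norm_pos_iff.2 (hwne (φ k))))]
        exact inv_mul_cancel₀ (ne_of_gt (norm_pos_iff.2 (hwne (φ k))))
      obtain ⟨u, humem, ψ, hψ, huconv⟩ := (isCompact_sphere (0:E) 1).tendsto_subseq huh
      have hwq : ∀ k, w (φ (ψ k)) = q (φ (ψ k)) - x := fun k => hw_eq _
      have hucone : u ∈ tangentConeAt ℝ M x := by
        apply mem_tangentCone_of_seq (q := fun k => q (φ (ψ k)))
          (fun k => hqM _) (fun k => hqnex _)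
        · exact hqlim.comp ((hφ.comp hψ).tendsto_atTop)
        · apply huconv.congr
          intro k
          simp only [Function.comp_apply]
          rw [← hwq k]
          
      have hperpu := hperp u hucone
      have hlbd : ∀ k, ε / 2 ≤ ⟪v, (‖w (φ (ψ k))‖)⁻¹ • w (φ (ψ k))⟫ := by
        intro k
        have h1 := hkey (φ (ψ k))
        have h2 := hφP (ψ k)
        have ht' := ht0 (φ (ψ k))
        have hwpos : 0 < ‖w (φ (ψ k))‖ := norm_pos_iff.2 (hwne _)
        rw [real_inner_smul_right]
        have h3 : ‖w (φ (ψ k))‖ / (2 * t (φ (ψ k))) ≤ ⟪v, w (φ (ψ k))⟫ / ‖w (φ (ψ k))‖ := by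
          rw [div_le_div_iff₀ (by positivity) hwpos]
          nlinarith [h1]
        have h4 : ε / 2 ≤ ‖w (φ (ψ k))‖ / (2 * t (φ (ψ k))) := by
          have h5 : ‖w (φ (ψ k))‖ / (2 * t (φ (ψ k))) = (‖w (φ (ψ k))‖ / t (φ (ψ k)))/2 := by
            ring
          rw [h5]
          linarith
        calc ε/2 ≤ ‖w (φ (ψ k))‖ / (2 * t (φ (ψ k))) := h4
          _ ≤ ⟪v, w (φ (ψ k))⟫ / ‖w (φ (ψ k))‖ := h3
          _ = (‖w (φ (ψ k))‖)⁻¹ * ⟪v, w (φ (ψ k))⟫ := by rw [div_eq_inv_mul]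
      have hinner_tend : Tendsto (fun k => ⟪v, (‖w (φ (ψ k))‖)⁻¹ • w (φ (ψ k))⟫) atTop
          (𝓝 ⟪v, u⟫) := by
        have hcont : Continuous fun z : E => ⟪v, z⟫ := continuous_const.inner continuous_id
        exact (hcont.tendsto u).comp huconv
      have hfin : ε/2 ≤ ⟪v, u⟫ := ge_of_tendsto hinner_tend
        (Filter.Eventually.of_forall hlbd)
      linarith
    have hev : ∀ᶠ n in atTop, ‖w n‖ / t n < 1/2 := by
      have h1 := Metric.tendsto_atTop.mp hratio (1/2) (by norm_num)
      obtain ⟨N, hN⟩ := h1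
      apply Filter.eventually_atTop.2 ⟨N, fun n hn => ?_⟩
      have h2 := hN n hn
      rw [Real.dist_eq, sub_zero,
        abs_of_nonneg (div_nonneg (norm_nonneg _) (le_of_lt (ht0 n)))] at h2
      exact h2
    have hzP : ∀ᶠ n in atTop,
        Metric.infDist (ξ (y n) + (sb / Metric.infDist (y n) M) • (y n - ξ (y n))) M = sb ∧
        ‖(ξ (y n) + (sb / Metric.infDist (y n) M) • (y n - ξ (y n))) - (x + sb • v)‖
          ≤ ‖w n‖ + 4*sb*(‖w n‖ / t n) := by
      filter_upwards [hev] with n hn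
      have hwt : ‖w n‖ < t n / 2 := by
        rw [div_lt_iff₀ (ht0 n)] at hn
        nlinarith [hn, ht0 n]
      have hd_low : t n / 2 < Metric.infDist (y n) M := by
        have h1 : t n - ‖w n‖ ≤ ‖(t n) • v - w n‖ := by
          have h2 := norm_sub_norm_le ((t n) • v) (w n)
          rw [norm_smul, hv, Real.norm_eq_abs, abs_of_pos (ht0 n), mul_one] at h2
          linarith
        rw [hdn_eq n]
        linarith
      have hdpos : 0 < Metric.infDist (y n) M :=
        lt_trans (by linarith [ht0 n] : (0:ℝ) < t n / 2) hd_low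
      obtain ⟨d, hddef⟩ : ∃ d : ℝ, d = Metric.infDist (y n) M := ⟨_, rfl⟩
      rw [← hddef] at hdpos hd_low ⊢
      have hray := hD.main_ray (y₀ := y n) (by rw [hddef] at hdpos; exact hdpos)
        (le_trans (le_of_lt (hdlt n)) (htsb n)) hsbτ
      rw [← hddef] at hray
      refine ⟨hray, ?_⟩
      have hzx : (ξ (y n) + (sb/d) • (y n - ξ (y n))) - (x + sb • v)
          = w n + ((sb/d) • ((t n) • v - w n) - sb • v) := by
        rw [hynq n, ← hxiw n]
        abel
      have hnd : ‖(t n) • v - w n‖ = d := by rw [← hdn_eq n, hddef]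
      have hb1 : ‖(sb/d) • ((t n) • v - w n) - sb • v‖ ≤ 2*sb*‖w n‖/d := by
        have he1 : (sb/d) • ((t n) • v - w n) - sb • v
            = (sb/d) • (((t n) • v - w n) - d • v) := by
          rw [smul_sub (sb/d) ((t n) • v - w n) (d • v), smul_smul,
            div_mul_cancel₀ _ (ne_of_gt hdpos)]
        rw [he1, norm_smul, Real.norm_eq_abs, abs_of_pos (div_pos hsb0 hdpos)]
        have he4 : |t n - d| ≤ ‖w n‖ := by
          have h5 : |‖(t n) • v‖ - ‖(t n) • v - w n‖| ≤ ‖(t n) • v - ((t n) • v - w n)‖ :=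
            abs_norm_sub_norm_le _ _
          have h6 : (t n) • v - ((t n) • v - w n) = w n := by abel
          rw [h6, hnd, norm_smul, hv, Real.norm_eq_abs, abs_of_pos (ht0 n), mul_one] at h5
          exact h5
        have he2 : ‖((t n) • v - w n) - d • v‖ ≤ |t n - d| + ‖w n‖ := by
          have he3 : ((t n) • v - w n) - d • v = (t n - d) • v - w n := by
            rw [sub_smul]; abel
          rw [he3]
          calc ‖(t n - d) • v - w n‖ ≤ ‖(t n - d) • v‖ + ‖w n‖ := norm_sub_le _ _
            _ = |t n - d| + ‖w n‖ := by
                rw [norm_smul, hv, Real.norm_eq_abs, mul_one]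
        have he5 : ‖((t n) • v - w n) - d • v‖ ≤ 2 * ‖w n‖ := by linarith
        calc sb/d * ‖((t n) • v - w n) - d • v‖ ≤ sb/d * (2*‖w n‖) :=
              mul_le_mul_of_nonneg_left he5 (le_of_lt (div_pos hsb0 hdpos))
          _ = 2*sb*‖w n‖/d := by ring
      have hb2 : 2*sb*‖w n‖/d ≤ 4*sb*(‖w n‖ / t n) := by
        rw [div_le_iff₀ hdpos]
        have h9 : 4*sb*(‖w n‖ / t n) * d = 4*sb*‖w n‖*(d / t n) := by ring
        rw [h9]
        have h10 : (1:ℝ)/2 ≤ d / t n := by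
          rw [le_div_iff₀ (ht0 n)]
          linarith
        have h11 : (0:ℝ) ≤ 4*sb*‖w n‖ := by positivity
        nlinarith [mul_le_mul_of_nonneg_left h10 h11]
      calc ‖(ξ (y n) + (sb/d) • (y n - ξ (y n))) - (x + sb • v)‖
          ≤ ‖w n‖ + ‖(sb/d) • ((t n) • v - w n) - sb • v‖ := by
            rw [hzx]; exact norm_add_le _ _
        _ ≤ ‖w n‖ + 4*sb*(‖w n‖ / t n) := by linarith
    have hwlim : Tendsto (fun n => ‖w n‖) atTop (𝓝 0) := by
      apply squeeze_zero (fun n => norm_nonneg _) hwle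
      have h2 := htlim.const_mul 2
      simpa using h2
    have hzbound_lim : Tendsto (fun n => ‖w n‖ + 4*sb*(‖w n‖ / t n)) atTop (𝓝 0) := by
      have h1 := hratio.const_mul (4*sb)
      have h2 := hwlim.add h1
      simpa using h2
    have hzlim : Tendsto
        (fun n => ξ (y n) + (sb / Metric.infDist (y n) M) • (y n - ξ (y n)))
        atTop (𝓝 (x + sb • v)) := by
      rw [tendsto_iff_norm_sub_tendsto_zero]
      apply squeeze_zero_norm' ?_ hzbound_lim
      filter_upwards [hzP] with n hn
      simpa using hn.2
    have hlast : Tendsto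
        (fun n => Metric.infDist (ξ (y n) + (sb / Metric.infDist (y n) M) • (y n - ξ (y n))) M)
        atTop (𝓝 (Metric.infDist (x + sb • v) M)) :=
      ((continuous_infDist_pt M).tendsto _).comp hzlim
    have hconst : Tendsto
        (fun n => Metric.infDist (ξ (y n) + (sb / Metric.infDist (y n) M) • (y n - ξ (y n))) M)
        atTop (𝓝 sb) := by
      apply Tendsto.congr' ?_ (tendsto_const_nhds (x := sb) (f := atTop (α := ℕ)))
      filter_upwards [hzP] with n hn
      exact hn.1.symm
    exact hCL (tendsto_nhds_unique hlast hconst)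

end NearData
end Aux

/-- Tangent-plane approximation controlled by the reach: for a compact C²
submanifold `M` with reach `τ > 0`, any `p ∈ M` with `‖p − x‖ ≤ s` satisfies
`d(p, x + T_x M) ≤ s²/(2τ)`. The tangent space `T` at `x` is characterized as
the tangent cone of `M` at `x`, a linear subspace for a C² submanifold. -/
theorem stmt_11 {n : ℕ} (M : Set (EuclideanSpace ℝ (Fin n))) (hM : IsCompact M)
    (τ : ℝ) (hτ : 0 < τ)
    (hreach : ∀ y : EuclideanSpace ℝ (Fin n), Metric.infDist y M < τ →
      ∃! p, p ∈ M ∧ dist y p = Metric.infDist y M)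
    (x : EuclideanSpace ℝ (Fin n)) (hx : x ∈ M)
    (T : Submodule ℝ (EuclideanSpace ℝ (Fin n)))
    (hT : tangentConeAt ℝ M x = (T : Set (EuclideanSpace ℝ (Fin n))))
    (s : ℝ) (hs : 0 ≤ s) :
    ∀ p ∈ M, dist p x ≤ s →
      Metric.infDist p ((fun v => x + v) '' (T : Set (EuclideanSpace ℝ (Fin n)))) ≤
        s ^ 2 / (2 * τ) := by
  intro p hp hps
  have hne : M.Nonempty := ⟨x, hx⟩
  have hex : ∀ y : EuclideanSpace ℝ (Fin n), ∃ z, z ∈ M ∧ dist y z = Metric.infDist y M := by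
    intro y
    obtain ⟨z, hz, he⟩ := hM.exists_infDist_eq_dist hne y
    exact ⟨z, hz, he.symm⟩
  choose ξ hξmem hξdist using hex
  have hD : NearData M τ ξ := by
    refine ⟨hM, hτ, hξmem, hξdist, ?_⟩
    intro y p' hyτ hp'M hp'd
    obtain ⟨z, _, hzun⟩ := hreach y hyτ
    have e1 := hzun p' ⟨hp'M, hp'd⟩
    have e2 := hzun (ξ y) ⟨hξmem y, hξdist y⟩
    rw [e1, e2]
  have hw : ‖p - x‖ ≤ s := by rw [← dist_eq_norm]; exact hps
  set P : EuclideanSpace ℝ (Fin n) := (T.orthogonalProjectionOnto (p - x) : EuclideanSpace ℝ (Fin n))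
    with hPdef
  have hPT : P ∈ T := SetLike.coe_mem _
  have hwp_orth : p - x - P ∈ Tᗮ := by
    have := Submodule.sub_starProjection_mem_orthogonal (K := T) (p - x); exact this
  have hmem : x + P ∈ (fun v => x + v) '' (T : Set (EuclideanSpace ℝ (Fin n))) :=
    ⟨P, hPT, rfl⟩
  have hle : Metric.infDist p ((fun v => x + v) '' (T : Set (EuclideanSpace ℝ (Fin n))))
      ≤ ‖p - x - P‖ := by
    have h1 := Metric.infDist_le_dist_of_mem (x := p) hmem
    have h2 : dist p (x + P) = ‖p - x - P‖ := by
      rw [dist_eq_norm]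
      congr 1
      abel
    rwa [h2] at h1
  by_cases hwp0 : p - x - P = 0
  · rw [hwp0, norm_zero] at hle
    exact le_trans hle (by positivity)
  · have hwppos : 0 < ‖p - x - P‖ := norm_pos_iff.2 hwp0
    have hv1 : ‖(‖p - x - P‖)⁻¹ • (p - x - P)‖ = 1 := by
      rw [norm_smul, Real.norm_eq_abs, abs_of_pos (inv_pos.2 hwppos)]
      exact inv_mul_cancel₀ (ne_of_gt hwppos)
    have hperp : ∀ u, u ∈ tangentConeAt ℝ M x →
        ⟪(‖p - x - P‖)⁻¹ • (p - x - P), u⟫ ≤ 0 := by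
      intro u hu
      rw [hT] at hu
      have h0 : ⟪u, p - x - P⟫ = 0 :=
        (Submodule.mem_orthogonal T (p - x - P)).mp hwp_orth u hu
      have h0' : ⟪p - x - P, u⟫ = 0 := by rw [real_inner_comm]; exact h0
      rw [real_inner_smul_left, h0', mul_zero]
    have hball := hD.normal_ball hx hv1 hperp p hp
    have hinner : ⟪(‖p - x - P‖)⁻¹ • (p - x - P), p - x⟫ = ‖p - x - P‖ := by
      rw [real_inner_smul_left]
      have hsplit : ⟪p - x - P, p - x⟫ = ⟪p - x - P, P + (p - x - P)⟫ := by
        congr 1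
        abel
      have hP0 : ⟪p - x - P, P⟫ = 0 := by
        rw [real_inner_comm]
        exact (Submodule.mem_orthogonal T (p - x - P)).mp hwp_orth P hPT
      rw [hsplit, inner_add_right, hP0, zero_add, real_inner_self_eq_norm_sq]
      field_simp
    rw [hinner] at hball
    have hfin : ‖p - x - P‖ ≤ s^2/(2*τ) := by
      rw [le_div_iff₀ (by positivity)]
      have h3 : ‖p - x‖^2 ≤ s^2 := by nlinarith [norm_nonneg (p - x)]
      nlinarith [hball]
    linarith
end

section
/- With notation as in the Backus–Gilbert formulation, if the weight wᵢ₀ at one sample point xᵢ₀ tends to infinity while all other weights stay fixed and the least-squares matrix remains invertible in the limit in the appropriate sense, then the weighted least-squares minimizer p* satisfies p*(xᵢ₀) → fᵢ₀; in particular, if the MLS weight function θ satisfies lim_{t→0} θ(t) = ∞, the MLS approximant interpolates the data: lim_{x → xᵢ} p_x(x) = f(xᵢ). -/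
open MvPolynomial Matrix Finset Filter Topology

/-- Interpolation property of MLS: if the weight function `θ` blows up at 0
(and the local least-squares problems are well conditioned), then the MLS
approximant interpolates the data: `p_y(y) → f(xᵢ₀)` as `y → xᵢ₀`. -/
theorem stmt_16 {d m N J : ℕ}
    (θ : ℝ → ℝ) (hθcont : ContinuousOn θ (Set.Ioi 0)) (hθpos : ∀ t > 0, 0 < θ t)
    (hθtop : Filter.Tendsto θ (nhdsWithin 0 (Set.Ioi 0)) Filter.atTop)
    (x : Fin N → Fin d → ℝ) (hxdist : Function.Injective x) (f : Fin N → ℝ)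
    (bb : Module.Basis (Fin J) ℝ (MvPolynomial.restrictTotalDegree (Fin d) ℝ m))
    (S : Set (Fin d → ℝ)) (hS : S = {y | ∀ i, y ≠ x i})
    (p : (Fin d → ℝ) → MvPolynomial (Fin d) ℝ)
    (hdeg : ∀ y ∈ S, (p y).totalDegree ≤ m)
    (hmin : ∀ y ∈ S, ∀ q : MvPolynomial (Fin d) ℝ, q.totalDegree ≤ m →
      ∑ i, (eval (x i) (p y) - f i) ^ 2 * θ (dist y (x i)) ≤
        ∑ i, (eval (x i) q - f i) ^ 2 * θ (dist y (x i)))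
    (hcond : ∀ y ∈ S, IsUnit
      ((Matrix.of fun i j => eval (x i) ((bb j : MvPolynomial (Fin d) ℝ)))ᵀ *
        Matrix.diagonal (fun i => θ (dist y (x i))) *
        Matrix.of fun i j => eval (x i) ((bb j : MvPolynomial (Fin d) ℝ))))
    (i₀ : Fin N) :
    Filter.Tendsto (fun y => eval y (p y)) (nhdsWithin (x i₀) S) (nhds (f i₀)) := by
  set L := nhdsWithin (x i₀) S with hL
  rcases L.eq_or_neBot with hbot | hne
  · rw [hbot]; exact tendsto_bot
  -- S is nonempty
  obtain ⟨y₀, hy₀⟩ := Filter.nonempty_of_mem (self_mem_nhdsWithin : S ∈ L)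
  -- distances from points in S to sample points are positive
  have hdistS : ∀ y ∈ S, ∀ i, 0 < dist y (x i) := by
    intro y hy i; rw [hS] at hy; exact dist_pos.2 (hy i)
  -- the evaluation linear map
  let E : MvPolynomial.restrictTotalDegree (Fin d) ℝ m →ₗ[ℝ] (Fin N → ℝ) :=
    { toFun := fun q i => eval (x i) (q : MvPolynomial (Fin d) ℝ)
      map_add' := fun a b => by funext i; simp
      map_smul' := fun c a => by funext i; simp [smul_eq_mul] }
  have hE : ∀ (q : MvPolynomial.restrictTotalDegree (Fin d) ℝ m) (i : Fin N), E q i = eval (x i) (q : MvPolynomial (Fin d) ℝ) :=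
    fun q i => rfl
  -- representation of evaluation through the basis
  have hrep : ∀ (q : MvPolynomial.restrictTotalDegree (Fin d) ℝ m) (y : Fin d → ℝ),
      eval y (q : MvPolynomial (Fin d) ℝ) =
        ∑ j, bb.repr q j * eval y ((bb j : MvPolynomial (Fin d) ℝ)) := by
    intro q y
    conv_lhs => rw [← bb.sum_repr q]
    push_cast
    simp [map_sum, smul_eq_mul]
  -- E is injective thanks to hcond
  have hEker : LinearMap.ker E = ⊥ := by
    rw [LinearMap.ker_eq_bot']
    intro q hq
    set Bm : Matrix (Fin N) (Fin J) ℝ :=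
      Matrix.of fun i j => eval (x i) ((bb j : MvPolynomial (Fin d) ℝ)) with hBm
    set c : Fin J → ℝ := fun j => bb.repr q j with hc
    have hBc : Bm.mulVec c = 0 := by
      funext i
      have h0 : eval (x i) (q : MvPolynomial (Fin d) ℝ) = 0 := by
        rw [← hE]; rw [hq]; rfl
      rw [hrep q (x i)] at h0
      rw [Finset.sum_congr rfl (fun j _ => mul_comm ((bb.repr q) j) _)] at h0
      simpa [Matrix.mulVec, dotProduct, hBm, hc] using h0
    have hMc : (Bmᵀ * Matrix.diagonal (fun i => θ (dist y₀ (x i))) * Bm).mulVec c = 0 := by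
      rw [← Matrix.mulVec_mulVec, ← Matrix.mulVec_mulVec, hBc]
      simp
    have hc0 : c = 0 := by
      obtain ⟨u, hu⟩ := hcond y₀ hy₀
      have : ((u⁻¹ : (Matrix (Fin J) (Fin J) ℝ)ˣ) : Matrix (Fin J) (Fin J) ℝ).mulVec
          ((Bmᵀ * Matrix.diagonal (fun i => θ (dist y₀ (x i))) * Bm).mulVec c) = c := by
        rw [Matrix.mulVec_mulVec, ← hu, Units.inv_mul]
        simp [Matrix.one_mulVec]
      rw [hMc] at this
      simpa using this.symm
    have hq0 : bb.repr q = 0 := by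
      ext j; exact congrFun hc0 j
    simpa using (LinearEquiv.map_eq_zero_iff bb.repr).1 hq0
  obtain ⟨Ψ, hΨ⟩ := E.exists_leftInverse_of_injective hEker
  -- the vector of values of p y at the sample points
  set v : (Fin d → ℝ) → Fin N → ℝ := fun y i => eval (x i) (p y) with hv
  -- for y ∈ S, Ψ recovers p y from its values
  have hΨv : ∀ y (hy : y ∈ S),
      Ψ (v y) = (⟨p y, (mem_restrictTotalDegree _ _ _).2 (hdeg y hy)⟩ : MvPolynomial.restrictTotalDegree (Fin d) ℝ m) := by
    intro y hy
    have h1 : v y = E (⟨p y, (mem_restrictTotalDegree _ _ _).2 (hdeg y hy)⟩ : MvPolynomial.restrictTotalDegree (Fin d) ℝ m) := rfl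
    rw [h1]
    exact LinearMap.congr_fun hΨ _
  -- the correction function G
  set G : (Fin d → ℝ) × (Fin N → ℝ) → ℝ := fun z =>
    eval z.1 ((Ψ z.2 : MvPolynomial (Fin d) ℝ)) -
      eval (x i₀) ((Ψ z.2 : MvPolynomial (Fin d) ℝ)) with hG
  have hG0 : ∀ w, G (x i₀, w) = 0 := fun w => sub_self _
  have hGcont : Continuous G := by
    have key : ∀ (y : Fin d → ℝ) (w : Fin N → ℝ),
        eval y ((Ψ w : MvPolynomial (Fin d) ℝ)) =
          ∑ j, ((bb.coord j).comp Ψ) w * eval y ((bb j : MvPolynomial (Fin d) ℝ)) := by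
      intro y w
      rw [hrep (Ψ w) y]
      simp [Module.Basis.coord_apply]
    rw [hG]
    simp only [key]
    apply Continuous.sub
    · exact continuous_finset_sum _ fun j _ =>
        (((bb.coord j).comp Ψ).continuous_of_finiteDimensional.comp continuous_snd).mul
          ((MvPolynomial.continuous_eval _).comp continuous_fst)
    · exact continuous_finset_sum _ fun j _ =>
        (((bb.coord j).comp Ψ).continuous_of_finiteDimensional.comp continuous_snd).mul
          continuous_const
  -- the basic error bound from minimality
  have hbound : ∀ y ∈ S, ∀ i, (v y i - f i) ^ 2 * θ (dist y (x i)) ≤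
      ∑ k ∈ univ.erase i₀, (f i₀ - f k) ^ 2 * θ (dist y (x k)) := by
    intro y hy i
    have h1 := hmin y hy (C (f i₀)) (by simp)
    have h2 : ∑ k, (eval (x k) (C (f i₀) : MvPolynomial (Fin d) ℝ) - f k) ^ 2 * θ (dist y (x k)) =
        ∑ k ∈ univ.erase i₀, (f i₀ - f k) ^ 2 * θ (dist y (x k)) := by
      rw [← Finset.sum_erase_add _ _ (mem_univ i₀)]
      simp
    rw [h2] at h1
    refine le_trans ?_ h1
    apply Finset.single_le_sum (f := fun k => (v y k - f k) ^ 2 * θ (dist y (x k))) ?_ (mem_univ i)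
    intro k _
    exact mul_nonneg (sq_nonneg _) (le_of_lt (hθpos _ (hdistS y hy k)))
  -- the bound converges, hence is eventually at most B
  set Cm : ℝ := ∑ k ∈ univ.erase i₀, (f i₀ - f k) ^ 2 * θ (dist (x i₀) (x k)) with hCm
  set B : ℝ := Cm + 1 with hB
  have hCtend : Tendsto (fun y => ∑ k ∈ univ.erase i₀, (f i₀ - f k) ^ 2 * θ (dist y (x k)))
      (nhds (x i₀)) (nhds Cm) := by
    rw [hCm]
    apply tendsto_finset_sum
    intro k hk
    have hkne : k ≠ i₀ := (Finset.mem_erase.1 hk).1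
    have hdpos : 0 < dist (x i₀) (x k) := dist_pos.2 fun h => hkne (hxdist h).symm
    apply Tendsto.const_mul
    exact (hθcont.continuousAt (Ioi_mem_nhds hdpos)).tendsto.comp
      ((continuous_id.dist continuous_const).tendsto _)
  have hCB : ∀ᶠ y in L, ∑ k ∈ univ.erase i₀, (f i₀ - f k) ^ 2 * θ (dist y (x k)) < B :=
    (hCtend.mono_left nhdsWithin_le_nhds).eventually_lt_const (by rw [hB]; linarith)
  -- θ at i₀ blows up along L
  have hti₀ : Tendsto (fun y => θ (dist y (x i₀))) L atTop := by
    apply hθtop.comp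
    rw [tendsto_nhdsWithin_iff]
    constructor
    · have : Tendsto (fun y => dist y (x i₀)) (nhds (x i₀)) (nhds (dist (x i₀) (x i₀))) :=
        (continuous_id.dist continuous_const).tendsto _
      simpa using this.mono_left nhdsWithin_le_nhds
    · filter_upwards [self_mem_nhdsWithin] with y hy
      exact hdistS y hy i₀
  -- v y i₀ → f i₀
  have hvi₀ : Tendsto (fun y => v y i₀) L (nhds (f i₀)) := by
    have h1 : ∀ᶠ y in L, (v y i₀ - f i₀) ^ 2 ≤ B / θ (dist y (x i₀)) := by
      filter_upwards [self_mem_nhdsWithin, hCB] with y hy hyB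
      rw [le_div_iff₀ (hθpos _ (hdistS y hy i₀))]
      exact le_of_lt (lt_of_le_of_lt (hbound y hy i₀) hyB)
    have h2 : Tendsto (fun y => B / θ (dist y (x i₀))) L (nhds 0) :=
      Tendsto.div_atTop tendsto_const_nhds hti₀
    have hsq : Tendsto (fun y => (v y i₀ - f i₀) ^ 2) L (nhds 0) :=
      tendsto_of_tendsto_of_tendsto_of_le_of_le' tendsto_const_nhds h2
        (Filter.Eventually.of_forall fun y => sq_nonneg _) h1
    have habs : Tendsto (fun y => |v y i₀ - f i₀|) L (nhds 0) := by
      have := hsq.sqrt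
      simpa [Real.sqrt_sq_eq_abs] using this
    have hsub : Tendsto (fun y => v y i₀ - f i₀) L (nhds 0) := by
      exact (tendsto_zero_iff_abs_tendsto_zero _).mpr habs
    have := hsub.add_const (f i₀)
    simpa using this
  -- compact set containing the values v y
  set t : Fin N → ℝ := fun i => if i = i₀ then 1 else θ (dist (x i₀) (x i)) / 2 with ht
  have htpos : ∀ i, 0 < t i := by
    intro i
    rw [ht]
    by_cases h : i = i₀
    · simp [h]
    · have hdpos : 0 < dist (x i₀) (x i) := dist_pos.2 fun hh => h (hxdist hh).symm
      have := hθpos _ hdpos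
      simp [h]
      linarith
  have htev : ∀ i, ∀ᶠ y in L, t i ≤ θ (dist y (x i)) := by
    intro i
    by_cases h : i = i₀
    · subst h
      have := hti₀.eventually_ge_atTop (1 : ℝ)
      filter_upwards [this] with y hy
      simpa [ht] using hy
    · have hdpos : 0 < dist (x i₀) (x i) := dist_pos.2 fun hh => h (hxdist hh).symm
      have hcont : Tendsto (fun y => θ (dist y (x i))) (nhds (x i₀))
          (nhds (θ (dist (x i₀) (x i)))) :=
        (hθcont.continuousAt (Ioi_mem_nhds hdpos)).tendsto.comp
          ((continuous_id.dist continuous_const).tendsto _)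
      have h2 : θ (dist (x i₀) (x i)) / 2 < θ (dist (x i₀) (x i)) := by
        have := hθpos _ hdpos; linarith
      filter_upwards [(hcont.mono_left nhdsWithin_le_nhds).eventually_const_lt h2] with y hy
      simp only [ht, if_neg h]
      exact le_of_lt hy
  set R : Fin N → ℝ := fun i => Real.sqrt (B / t i) with hR
  set K : Set (Fin N → ℝ) := Set.pi Set.univ (fun i => Set.Icc (f i - R i) (f i + R i)) with hK
  have hKcomp : IsCompact K := isCompact_univ_pi fun i => isCompact_Icc
  have hvK : ∀ᶠ y in L, v y ∈ K := by
    have hcomp : ∀ i, ∀ᶠ y in L, v y i ∈ Set.Icc (f i - R i) (f i + R i) := by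
      intro i
      filter_upwards [self_mem_nhdsWithin, hCB, htev i] with y hy hyB hyt
      have hsq : (v y i - f i) ^ 2 ≤ B / t i := by
        rw [le_div_iff₀ (htpos i)]
        calc (v y i - f i) ^ 2 * t i
            ≤ (v y i - f i) ^ 2 * θ (dist y (x i)) :=
              mul_le_mul_of_nonneg_left hyt (sq_nonneg _)
          _ ≤ ∑ k ∈ univ.erase i₀, (f i₀ - f k) ^ 2 * θ (dist y (x k)) := hbound y hy i
          _ ≤ B := le_of_lt hyB
      have habs : |v y i - f i| ≤ R i := by
        rw [hR]
        calc |v y i - f i| = Real.sqrt ((v y i - f i) ^ 2) := (Real.sqrt_sq_eq_abs _).symm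
          _ ≤ Real.sqrt (B / t i) := Real.sqrt_le_sqrt hsq
      rw [abs_le] at habs
      obtain ⟨ha, hb⟩ := habs
      rw [Set.mem_Icc]
      constructor <;> linarith
    filter_upwards [Filter.eventually_all.2 hcomp] with y hy
    rw [hK, Set.mem_univ_pi]
    exact hy
  -- G (y, v y) → 0 via the tube lemma
  have hGtend : Tendsto (fun y => G (y, v y)) L (nhds 0) := by
    rw [Metric.tendsto_nhds]
    intro ε hε
    have hUopen : IsOpen (G ⁻¹' Metric.ball 0 ε) := hGcont.isOpen_preimage _ Metric.isOpen_ball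
    have hsub : ({x i₀} ×ˢ K : Set ((Fin d → ℝ) × (Fin N → ℝ))) ⊆ G ⁻¹' Metric.ball 0 ε := by
      rintro ⟨z1, z2⟩ hz
      rw [Set.mem_prod] at hz
      obtain ⟨hz1, hz2⟩ := hz
      rw [Set.mem_singleton_iff] at hz1
      subst hz1
      simp only [Set.mem_preimage, Metric.mem_ball]
      rw [hG0 z2]
      simpa using hε
    obtain ⟨u, w, huo, _, hu, hw, huw⟩ :=
      generalized_tube_lemma isCompact_singleton hKcomp hUopen hsub
    have hymem : ∀ᶠ y in L, y ∈ u := by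
      have : u ∈ nhds (x i₀) := huo.mem_nhds (hu rfl)
      exact nhdsWithin_le_nhds this
    filter_upwards [hymem, hvK] with y hyu hyK
    have : (y, v y) ∈ G ⁻¹' Metric.ball 0 ε := huw ⟨hyu, hw hyK⟩
    simpa [Real.dist_eq] using this
  -- conclude
  have heq : ∀ᶠ y in L, eval y (p y) = G (y, v y) + v y i₀ := by
    filter_upwards [self_mem_nhdsWithin] with y hy
    have h1 := hΨv y hy
    rw [hG]
    simp only [h1]
    simp [hv]
  have hfinal := hGtend.add hvi₀
  rw [zero_add] at hfinal
  exact hfinal.congr' (heq.mono fun y h => h.symm)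
end
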